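/- Let X ~ P and Y ~ Q be independent random variables on ℕ, with X ultra bounded with ratio λ and Y ultra bounded with ratio μ. Then X + Y (with distribution the convolution P*Q) is ultra bounded with ratio λ + μ, and for every α ∈ (0,1) the thinned distribution T_α(P) is ultra bounded with ratio αλ. -/

import Mathlib

open scoped BigOperators ENNReal
open Filter Topology

noncomputable section

/-- Vandermonde for descending factorials. -/
lemma descFactorial_add_eq (i j k : ℕ) :
    (i + j).descFactorial k
      = ∑ t ∈ Finset.range (k + 1),
          k.choose t * (i.descFactorial t * j.descFactorial (k - t)) := by
  rw [Nat.descFactorial_eq_factorial_mul_choose, Nat.add_choose_eq,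
    Finset.Nat.sum_antidiagonal_eq_sum_range_succ_mk, Finset.mul_sum]
  refine Finset.sum_congr rfl fun t ht => ?_
  have htk : t ≤ k := Nat.lt_succ_iff.mp (Finset.mem_range.mp ht)
  rw [Nat.descFactorial_eq_factorial_mul_choose, Nat.descFactorial_eq_factorial_mul_choose,
    ← Nat.choose_mul_factorial_mul_factorial htk]
  ring

lemma descF_choose_key {x k w : ℕ} (h : k + w ≤ x) :
    (k + w).descFactorial k * x.choose (k + w) = x.descFactorial k * (x - k).choose w := by
  have h1 := Nat.choose_mul (n := x) (Nat.le_add_right k w)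
  have h2 : k + w - k = w := by omega
  rw [h2] at h1
  rw [Nat.descFactorial_eq_factorial_mul_choose, Nat.descFactorial_eq_factorial_mul_choose]
  calc Nat.factorial k * (k + w).choose k * x.choose (k + w)
      = Nat.factorial k * (x.choose (k + w) * (k + w).choose k) := by ring
    _ = Nat.factorial k * (x.choose k * (x - k).choose w) := by rw [h1]
    _ = Nat.factorial k * x.choose k * (x - k).choose w := by ring

/-- Factorial moments of a binomial distribution. -/
lemma binom_fm (x k : ℕ) (α : ℝ) :
    ∑ z ∈ Finset.range (x + 1),
        (x.choose z : ℝ) * α ^ z * (1 - α) ^ (x - z) * (z.descFactorial k : ℝ)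
      = α ^ k * (x.descFactorial k : ℝ) := by
  by_cases hkx : k ≤ x
  · have hx1 : x + 1 = k + (x - k + 1) := by omega
    rw [hx1, Finset.sum_range_add]
    have h0 : ∑ z ∈ Finset.range k,
        (x.choose z : ℝ) * α ^ z * (1 - α) ^ (x - z) * (z.descFactorial k : ℝ) = 0 := by
      refine Finset.sum_eq_zero fun z hz => ?_
      have : z.descFactorial k = 0 := Nat.descFactorial_eq_zero_iff_lt.mpr (Finset.mem_range.mp hz)
      rw [this]; simp
    rw [h0, zero_add]
    have hsum : ∑ w ∈ Finset.range (x - k + 1),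
        (x.choose (k + w) : ℝ) * α ^ (k + w) * (1 - α) ^ (x - (k + w))
          * ((k + w).descFactorial k : ℝ)
        = (x.descFactorial k : ℝ) * α ^ k
            * ∑ w ∈ Finset.range (x - k + 1),
                α ^ w * (1 - α) ^ (x - k - w) * ((x - k).choose w : ℝ) := by
      rw [Finset.mul_sum]
      refine Finset.sum_congr rfl fun w hw => ?_
      have hwk : k + w ≤ x := by
        have := Finset.mem_range.mp hw; omega
      have hkey : ((k + w).descFactorial k : ℝ) * (x.choose (k + w) : ℝ)
          = (x.descFactorial k : ℝ) * ((x - k).choose w : ℝ) := by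
        have := descF_choose_key hwk
        exact_mod_cast congrArg (Nat.cast : ℕ → ℝ) this
      have hsub : x - (k + w) = x - k - w := by omega
      rw [hsub, pow_add]
      calc (x.choose (k + w) : ℝ) * (α ^ k * α ^ w) * (1 - α) ^ (x - k - w)
            * ((k + w).descFactorial k : ℝ)
          = (((k + w).descFactorial k : ℝ) * (x.choose (k + w) : ℝ))
              * (α ^ k * α ^ w * (1 - α) ^ (x - k - w)) := by ring
        _ = ((x.descFactorial k : ℝ) * ((x - k).choose w : ℝ))
              * (α ^ k * α ^ w * (1 - α) ^ (x - k - w)) := by rw [hkey]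
        _ = (x.descFactorial k : ℝ) * α ^ k * (α ^ w * (1 - α) ^ (x - k - w)
              * ((x - k).choose w : ℝ)) := by ring
    rw [hsum]
    have hone : ∑ w ∈ Finset.range (x - k + 1),
        α ^ w * (1 - α) ^ (x - k - w) * ((x - k).choose w : ℝ) = 1 := by
      have := add_pow α (1 - α) (x - k)
      simp only [add_sub_cancel, one_pow] at this
      exact this.symm
    rw [hone, mul_one]; ring
  · push_neg at hkx
    have hR : x.descFactorial k = 0 := Nat.descFactorial_eq_zero_iff_lt.mpr hkx
    rw [hR]
    rw [Finset.sum_eq_zero]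
    · simp
    · intro z hz
      have : z.descFactorial k = 0 := by
        refine Nat.descFactorial_eq_zero_iff_lt.mpr ?_
        have := Finset.mem_range.mp hz; omega
      rw [this]; simp

/-- A probability mass function on ℕ: nonnegative values summing to 1. -/
def IsPMF (P : ℕ → ℝ) : Prop := (∀ x, 0 ≤ P x) ∧ HasSum P 1

/-- The α-thinning of a distribution `P` on ℕ. -/
def thin (α : ℝ) (P : ℕ → ℝ) (z : ℕ) : ℝ :=
  ∑' x : ℕ, P x * (x.choose z : ℝ) * α ^ z * (1 - α) ^ (x - z)

/-- Convolution of two distributions on ℕ. -/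
def conv (P Q : ℕ → ℝ) (n : ℕ) : ℝ :=
  ∑ k ∈ Finset.range (n + 1), P k * Q (n - k)

/-- The k-th factorial moment of a distribution `P` on ℕ, valued in `[0,∞]`. -/
def fmE (P : ℕ → ℝ) (k : ℕ) : ℝ≥0∞ :=
  ∑' x : ℕ, ENNReal.ofReal (P x) * (x.descFactorial k : ℝ≥0∞)

/-- Ultra boundedness with ratio λ: `E[X^((k+1)↓)] ≤ λ·E[X^(k↓)]` for all `k ≥ 0`. -/
def IsUB (P : ℕ → ℝ) (lam : ℝ) : Prop :=
  ∀ k : ℕ, fmE P (k + 1) ≤ ENNReal.ofReal lam * fmE P k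

lemma fmE_zero {P : ℕ → ℝ} (hP : IsPMF P) : fmE P 0 = 1 := by
  unfold fmE
  simp only [Nat.descFactorial_zero, Nat.cast_one, mul_one]
  rw [← ENNReal.ofReal_tsum_of_nonneg hP.1 hP.2.summable, hP.2.tsum_eq, ENNReal.ofReal_one]

lemma summable_mul_descF {P : ℕ → ℝ} (hP : IsPMF P) {k : ℕ} (h : fmE P k ≠ ∞) :
    Summable (fun x : ℕ => P x * (x.descFactorial k : ℝ)) := by
  have := ENNReal.summable_toReal h
  refine this.congr fun x => ?_
  rw [ENNReal.toReal_mul, ENNReal.toReal_ofReal (hP.1 x)]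
  simp



lemma fmE_ne_top {P : ℕ → ℝ} {lam : ℝ} (hP : IsPMF P) (hub : IsUB P lam) :
    ∀ k, fmE P k ≠ ∞ := by
  intro k
  induction k with
  | zero => rw [fmE_zero hP]; exact ENNReal.one_ne_top
  | succ n ih =>
      exact ne_top_of_le_ne_top (by
        exact ENNReal.mul_ne_top ENNReal.ofReal_ne_top ih) (hub n)

lemma fmE_thin {P : ℕ → ℝ} (hP : IsPMF P) {α : ℝ} (hα : α ∈ Set.Ioo (0:ℝ) 1)
    (hfin : ∀ k, fmE P k ≠ ∞) (k : ℕ) :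
    fmE (thin α P) k = ENNReal.ofReal α ^ k * fmE P k := by
  obtain ⟨hα0, hα1⟩ := hα
  have h1α : (0:ℝ) ≤ 1 - α := by linarith
  -- nonnegativity of the thinning summand
  have hterm : ∀ z x : ℕ, 0 ≤ P x * (x.choose z : ℝ) * α ^ z * (1 - α) ^ (x - z) := by
    intro z x
    have := hP.1 x
    positivity
  -- summability of the thinning summand
  have hsummable : ∀ z : ℕ, Summable
      (fun x : ℕ => P x * (x.choose z : ℝ) * α ^ z * (1 - α) ^ (x - z)) := by
    intro z
    refine (summable_mul_descF hP (hfin z)).of_nonneg_of_le (hterm z) fun x => ?_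
    have hc : (x.choose z : ℝ) ≤ (x.descFactorial z : ℝ) := by
      have : x.choose z ≤ x.descFactorial z := by
        rw [Nat.descFactorial_eq_factorial_mul_choose]
        exact Nat.le_mul_of_pos_left _ (Nat.factorial_pos z)
      exact_mod_cast this
    have h1 : α ^ z ≤ 1 := pow_le_one₀ hα0.le hα1.le
    have h2 : (1 - α) ^ (x - z) ≤ 1 := pow_le_one₀ h1α (by linarith)
    have hx := hP.1 x
    calc P x * (x.choose z : ℝ) * α ^ z * (1 - α) ^ (x - z)
        ≤ P x * (x.descFactorial z : ℝ) * 1 * 1 := by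
          gcongr
      _ = P x * (x.descFactorial z : ℝ) := by ring
  -- express fmE of thin as a double tsum in ℝ≥0∞
  have hofReal : ∀ z : ℕ, ENNReal.ofReal (thin α P z)
      = ∑' x : ℕ, ENNReal.ofReal (P x * (x.choose z : ℝ) * α ^ z * (1 - α) ^ (x - z)) := by
    intro z
    exact ENNReal.ofReal_tsum_of_nonneg (hterm z) (hsummable z)
  calc fmE (thin α P) k
      = ∑' z : ℕ, ∑' x : ℕ,
          ENNReal.ofReal (P x * (x.choose z : ℝ) * α ^ z * (1 - α) ^ (x - z))
            * (z.descFactorial k : ℝ≥0∞) := by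
        unfold fmE
        refine tsum_congr fun z => ?_
        rw [hofReal z, ENNReal.tsum_mul_right]
    _ = ∑' x : ℕ, ∑' z : ℕ,
          ENNReal.ofReal (P x * (x.choose z : ℝ) * α ^ z * (1 - α) ^ (x - z))
            * (z.descFactorial k : ℝ≥0∞) := ENNReal.tsum_comm
    _ = ∑' x : ℕ, ENNReal.ofReal α ^ k * (ENNReal.ofReal (P x) * (x.descFactorial k : ℝ≥0∞)) := by
        refine tsum_congr fun x => ?_
        have hx := hP.1 x
        have hvanish : ∀ z ∉ Finset.range (x + 1),
            ENNReal.ofReal (P x * (x.choose z : ℝ) * α ^ z * (1 - α) ^ (x - z))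
              * (z.descFactorial k : ℝ≥0∞) = 0 := by
          intro z hz
          have hxz : x < z := by simpa [Nat.lt_succ_iff] using hz
          rw [Nat.choose_eq_zero_of_lt hxz]
          simp
        rw [tsum_eq_sum hvanish]
        have hterm' : ∀ z ∈ Finset.range (x + 1),
            ENNReal.ofReal (P x * (x.choose z : ℝ) * α ^ z * (1 - α) ^ (x - z))
              * (z.descFactorial k : ℝ≥0∞)
            = ENNReal.ofReal (P x * ((x.choose z : ℝ) * α ^ z * (1 - α) ^ (x - z)
                * (z.descFactorial k : ℝ))) := by
          intro z _
          rw [← ENNReal.ofReal_natCast (z.descFactorial k), ← ENNReal.ofReal_mul (hterm z x)]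
          exact congrArg ENNReal.ofReal (by ring)
        rw [Finset.sum_congr rfl hterm',
          ← ENNReal.ofReal_sum_of_nonneg (fun z _ => by
            have := hP.1 x
            positivity),
          ← Finset.mul_sum, binom_fm]
        rw [ENNReal.ofReal_mul hx,
          ENNReal.ofReal_mul (by positivity : (0:ℝ) ≤ α ^ k),
          ENNReal.ofReal_pow hα0.le, ENNReal.ofReal_natCast]
        ring
    _ = ENNReal.ofReal α ^ k * fmE P k := by
        rw [ENNReal.tsum_mul_left]; rfl

lemma fmE_conv {P Q : ℕ → ℝ} (hP : IsPMF P) (hQ : IsPMF Q) (k : ℕ) :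
    fmE (conv P Q) k
      = ∑ t ∈ Finset.range (k + 1),
          (k.choose t : ℝ≥0∞) * (fmE P t * fmE Q (k - t)) := by
  classical
  set gP : ℕ → ℝ≥0∞ := fun x => ENNReal.ofReal (P x) with hgP
  set gQ : ℕ → ℝ≥0∞ := fun x => ENNReal.ofReal (Q x) with hgQ
  set G : ℕ × ℕ → ℝ≥0∞ := fun p =>
    if p.2 ≤ p.1 then gP p.2 * gQ (p.1 - p.2) * ((p.1).descFactorial k : ℝ≥0∞) else 0
    with hG
  have e_inj : Function.Injective (fun q : ℕ × ℕ => ((q.1 + q.2, q.1) : ℕ × ℕ)) := by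
    intro a b h
    simp only [Prod.mk.injEq] at h
    exact Prod.ext h.2 (by omega)
  have step1 : fmE (conv P Q) k = ∑' n : ℕ, ∑' i : ℕ, G (n, i) := by
    unfold fmE conv
    refine tsum_congr fun n => ?_
    rw [ENNReal.ofReal_sum_of_nonneg (fun i _ => mul_nonneg (hP.1 i) (hQ.1 _)),
      Finset.sum_mul]
    rw [tsum_eq_sum (s := Finset.range (n + 1))
      (fun i hi => by
        have hni : ¬ i ≤ n := by simpa [Nat.lt_succ_iff] using hi
        simp only [hG, if_neg hni])]
    refine Finset.sum_congr rfl fun i hi => ?_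
    have hin : i ≤ n := Nat.lt_succ_iff.mp (Finset.mem_range.mp hi)
    simp only [hG, if_pos hin]
    rw [ENNReal.ofReal_mul (hP.1 i)]
  have step2 : (∑' n : ℕ, ∑' i : ℕ, G (n, i))
      = ∑' q : ℕ × ℕ, gP q.1 * gQ q.2 * (((q.1 + q.2).descFactorial k : ℕ) : ℝ≥0∞) := by
    rw [← ENNReal.tsum_prod' (f := G)]
    rw [← Function.Injective.tsum_eq e_inj (f := G)
      (fun p hp => by
        have hle : p.2 ≤ p.1 := by
          by_contra hcon
          exact hp (by simp only [hG, if_neg hcon])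
        exact ⟨(p.2, p.1 - p.2), by
          have h12 : p.2 + (p.1 - p.2) = p.1 := by omega
          simp [h12]⟩)]
    refine tsum_congr fun q => ?_
    simp only [hG, if_pos (Nat.le_add_right q.1 q.2)]
    have hq : q.1 + q.2 - q.1 = q.2 := by omega
    rw [hq]
  have step3 : (∑' q : ℕ × ℕ, gP q.1 * gQ q.2 * (((q.1 + q.2).descFactorial k : ℕ) : ℝ≥0∞))
      = ∑ t ∈ Finset.range (k + 1),
          (k.choose t : ℝ≥0∞) * (fmE P t * fmE Q (k - t)) := by
    rw [ENNReal.tsum_prod']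
    calc ∑' (i : ℕ) (j : ℕ), gP i * gQ j * (((i + j).descFactorial k : ℕ) : ℝ≥0∞)
        = ∑' (i : ℕ) (j : ℕ), ∑ t ∈ Finset.range (k + 1),
            (k.choose t : ℝ≥0∞)
              * ((gP i * (i.descFactorial t : ℝ≥0∞))
                * (gQ j * (j.descFactorial (k - t) : ℝ≥0∞))) := by
          refine tsum_congr fun i => tsum_congr fun j => ?_
          rw [descFactorial_add_eq i j k]
          push_cast
          rw [Finset.mul_sum]
          refine Finset.sum_congr rfl fun t _ => by ring
      _ = ∑ t ∈ Finset.range (k + 1), ∑' (i : ℕ) (j : ℕ),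
            (k.choose t : ℝ≥0∞)
              * ((gP i * (i.descFactorial t : ℝ≥0∞))
                * (gQ j * (j.descFactorial (k - t) : ℝ≥0∞))) := by
          rw [← Summable.tsum_finsetSum (fun t _ => ENNReal.summable)]
          refine tsum_congr fun i => ?_
          rw [← Summable.tsum_finsetSum (fun t _ => ENNReal.summable)]
      _ = ∑ t ∈ Finset.range (k + 1),
            (k.choose t : ℝ≥0∞) * (fmE P t * fmE Q (k - t)) := by
          refine Finset.sum_congr rfl fun t _ => ?_
          calc ∑' (i : ℕ) (j : ℕ), (k.choose t : ℝ≥0∞)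
                * ((gP i * (i.descFactorial t : ℝ≥0∞))
                  * (gQ j * (j.descFactorial (k - t) : ℝ≥0∞)))
              = ∑' (i : ℕ), (k.choose t : ℝ≥0∞)
                  * ((gP i * (i.descFactorial t : ℝ≥0∞))
                    * ∑' (j : ℕ), gQ j * (j.descFactorial (k - t) : ℝ≥0∞)) := by
                refine tsum_congr fun i => ?_
                rw [← ENNReal.tsum_mul_left, ← ENNReal.tsum_mul_left]
            _ = (k.choose t : ℝ≥0∞) * (fmE P t * fmE Q (k - t)) := by
                rw [ENNReal.tsum_mul_left, ENNReal.tsum_mul_right]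
                rfl
  rw [step1, step2, step3]

/-- Ultra boundedness is preserved under convolution (independent sums) and thinning. -/
theorem ub_conv_and_thin (P Q : ℕ → ℝ) (hP : IsPMF P) (hQ : IsPMF Q)
    (lam mu : ℝ) (hlam : 0 < lam) (hmu : 0 < mu)
    (hPub : IsUB P lam) (hQub : IsUB Q mu) :
    IsUB (conv P Q) (lam + mu) ∧
      ∀ α ∈ Set.Ioo (0 : ℝ) 1, IsUB (thin α P) (α * lam) := by
  constructor
  · intro k
    set a : ℕ → ℝ≥0∞ := fmE P with ha
    set b : ℕ → ℝ≥0∞ := fmE Q with hb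
    have hsplit : fmE (conv P Q) (k + 1)
        = (∑ t ∈ Finset.range (k + 1), (k.choose t : ℝ≥0∞) * (a (t + 1) * b (k - t)))
          + ∑ t ∈ Finset.range (k + 1), (k.choose t : ℝ≥0∞) * (a t * b (k - t + 1)) := by
      rw [fmE_conv hP hQ (k + 1)]
      rw [Finset.sum_range_succ']
      have hf0 : ((k + 1).choose 0 : ℝ≥0∞) * (a 0 * b (k + 1 - 0))
          = (k.choose 0 : ℝ≥0∞) * (a 0 * b (k + 1 - 0)) := by norm_num
      have hstep : ∀ t ∈ Finset.range (k + 1),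
          ((k + 1).choose (t + 1) : ℝ≥0∞) * (a (t + 1) * b (k + 1 - (t + 1)))
            = (k.choose t : ℝ≥0∞) * (a (t + 1) * b (k - t))
              + (k.choose (t + 1) : ℝ≥0∞) * (a (t + 1) * b (k + 1 - (t + 1))) := by
        intro t _
        have hsub : k + 1 - (t + 1) = k - t := by omega
        rw [Nat.choose_succ_succ, hsub]
        push_cast
        ring
      rw [Finset.sum_congr rfl hstep, Finset.sum_add_distrib, hf0]
      have hsecond : (∑ t ∈ Finset.range (k + 1),
            (k.choose (t + 1) : ℝ≥0∞) * (a (t + 1) * b (k + 1 - (t + 1))))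
          + (k.choose 0 : ℝ≥0∞) * (a 0 * b (k + 1 - 0))
          = ∑ t ∈ Finset.range (k + 1), (k.choose t : ℝ≥0∞) * (a t * b (k - t + 1)) := by
        rw [← Finset.sum_range_succ' (fun s => (k.choose s : ℝ≥0∞) * (a s * b (k + 1 - s))) (k + 1)]
        rw [Finset.sum_range_succ]
        have hz : (k.choose (k + 1) : ℝ≥0∞) = 0 := by
          rw [Nat.choose_eq_zero_of_lt (Nat.lt_succ_self k)]; norm_num
        rw [hz, zero_mul, add_zero]
        refine Finset.sum_congr rfl fun s hs => ?_
        have hsk : s ≤ k := Nat.lt_succ_iff.mp (Finset.mem_range.mp hs)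
        have : k + 1 - s = k - s + 1 := by omega
        rw [this]
      rw [add_assoc, hsecond]
    have hbound1 : (∑ t ∈ Finset.range (k + 1), (k.choose t : ℝ≥0∞) * (a (t + 1) * b (k - t)))
        ≤ ENNReal.ofReal lam * ∑ t ∈ Finset.range (k + 1),
            (k.choose t : ℝ≥0∞) * (a t * b (k - t)) := by
      rw [Finset.mul_sum]
      refine Finset.sum_le_sum fun t _ => ?_
      calc (k.choose t : ℝ≥0∞) * (a (t + 1) * b (k - t))
          ≤ (k.choose t : ℝ≥0∞) * ((ENNReal.ofReal lam * a t) * b (k - t)) := by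
            gcongr
            exact hPub t
        _ = ENNReal.ofReal lam * ((k.choose t : ℝ≥0∞) * (a t * b (k - t))) := by ring
    have hbound2 : (∑ t ∈ Finset.range (k + 1), (k.choose t : ℝ≥0∞) * (a t * b (k - t + 1)))
        ≤ ENNReal.ofReal mu * ∑ t ∈ Finset.range (k + 1),
            (k.choose t : ℝ≥0∞) * (a t * b (k - t)) := by
      rw [Finset.mul_sum]
      refine Finset.sum_le_sum fun t _ => ?_
      calc (k.choose t : ℝ≥0∞) * (a t * b (k - t + 1))
          ≤ (k.choose t : ℝ≥0∞) * (a t * (ENNReal.ofReal mu * b (k - t))) := by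
            gcongr
            exact hQub (k - t)
        _ = ENNReal.ofReal mu * ((k.choose t : ℝ≥0∞) * (a t * b (k - t))) := by ring
    calc fmE (conv P Q) (k + 1)
        ≤ ENNReal.ofReal lam * ∑ t ∈ Finset.range (k + 1),
              (k.choose t : ℝ≥0∞) * (a t * b (k - t))
          + ENNReal.ofReal mu * ∑ t ∈ Finset.range (k + 1),
              (k.choose t : ℝ≥0∞) * (a t * b (k - t)) := by
          rw [hsplit]
          exact add_le_add hbound1 hbound2
      _ = ENNReal.ofReal (lam + mu) * fmE (conv P Q) k := by
          rw [fmE_conv hP hQ k, ENNReal.ofReal_add hlam.le hmu.le, add_mul]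
  · intro α hα k
    have hfin := fmE_ne_top hP hPub
    rw [fmE_thin hP hα hfin (k + 1), fmE_thin hP hα hfin k, pow_succ]
    calc ENNReal.ofReal α ^ k * ENNReal.ofReal α * fmE P (k + 1)
        ≤ ENNReal.ofReal α ^ k * ENNReal.ofReal α * (ENNReal.ofReal lam * fmE P k) := by
          gcongr
          exact hPub k
      _ = ENNReal.ofReal (α * lam) * (ENNReal.ofReal α ^ k * fmE P k) := by
          rw [ENNReal.ofReal_mul hα.1.le]
          ring
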